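/- Let (T*, ≺) be a template that has an eventually singleton ω-branch, i.e., an infinite branch (X_0 ≺ X_1 ≺ X_2 ≺ …) through the levels such that the integer label n(X_k, X_{k+1}) equals 1 for all but finitely many k. Then any tree T encoded by T* has an infinite branch (an infinite linearly ordered subset meeting every level). -/
import Mathlib


/-- A well-founded tree order of height at most ω: a partial order with a least
element (root) in which the set of predecessors of every element is finite and
linearly ordered. -/
structure TreeOrder (T : Type*) where
  le : T → T → Prop
  refl : ∀ x, le x x
  antisymm : ∀ x y, le x y → le y x → x = y
  trans : ∀ x y z, le x y → le y z → le x z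
  root : T
  root_le : ∀ x, le root x
  pred_finite : ∀ x, {y | le y x}.Finite
  pred_chain : ∀ x y z, le y x → le z x → le y z ∨ le z y

namespace TreeOrder

variable {T : Type*} (t : TreeOrder T)

/-- The strict order associated to a tree order. -/
def lt (x y : T) : Prop := t.le x y ∧ x ≠ y

/-- The `n`-th level: elements with exactly `n` strict predecessors. -/
def level (n : ℕ) : Set T := {x | {y | t.lt y x}.ncard = n}

/-- The tree has ω levels: every level is nonempty. -/
def OmegaLevels : Prop := ∀ n, (t.level n).Nonempty

/-- All levels are finite. -/
def FiniteLevels : Prop := ∀ n, (t.level n).Finite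

/-- No leaves: every element has a strict successor. -/
def NoLeaves : Prop := ∀ x, ∃ y, t.lt x y

/-- `y` is an immediate successor of `x`. -/
def ImmSucc (x y : T) : Prop := t.lt x y ∧ ¬ ∃ z, t.lt x z ∧ t.lt z y

/-- Union of the first `n` levels. -/
def below (n : ℕ) : Set T := {x | ∃ k < n, x ∈ t.level k}

end TreeOrder


/-- A template: a tree with ω levels, all finite (hence finitely branching),
together with a linear order on the immediate successors of each node and a
positive integer label on each edge. -/
structure Template (A : Type*) where
  t : TreeOrder A
  omega : t.OmegaLevels
  finlev : t.FiniteLevels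
  label : A → A → ℕ
  label_pos : ∀ X Y, t.ImmSucc X Y → 0 < label X Y
  sOrd : A → A → A → Prop
  sOrd_trans : ∀ X Y Z W, t.ImmSucc X Y → t.ImmSucc X Z → t.ImmSucc X W →
    sOrd X Y Z → sOrd X Z W → sOrd X Y W
  sOrd_antisymm : ∀ X Y Z, t.ImmSucc X Y → t.ImmSucc X Z →
    sOrd X Y Z → sOrd X Z Y → Y = Z
  sOrd_total : ∀ X Y Z, t.ImmSucc X Y → t.ImmSucc X Z → sOrd X Y Z ∨ sOrd X Z Y

/-- A tree `t` (with ω levels, all finite) is encoded by the template `τ` via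
pieces `E X`: the pieces corresponding to the n-th level of the template
partition the n-th level of the tree, every element of the piece `E X` has
exactly `label X Y` immediate successors in the piece `E Y` for every
≺-immediate successor `Y` of `X`, and no other immediate successors. -/
def Encodes {A T : Type*} (τ : Template A) (t : TreeOrder T) (E : A → Set T) : Prop :=
  t.OmegaLevels ∧ t.FiniteLevels ∧
  (∀ n, ∀ X ∈ τ.t.level n, (E X).Nonempty ∧ E X ⊆ t.level n) ∧
  (∀ n, ∀ x ∈ t.level n, ∃! X, X ∈ τ.t.level n ∧ x ∈ E X) ∧
  (∀ X Y, τ.t.ImmSucc X Y → ∀ x ∈ E X, {y | y ∈ E Y ∧ t.ImmSucc x y}.ncard = τ.label X Y) ∧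
  (∀ x y : T, t.ImmSucc x y → ∃ X Y, τ.t.ImmSucc X Y ∧ x ∈ E X ∧ y ∈ E Y)

lemma TreeOrder.lt_trans' {T : Type*} (t : TreeOrder T) {x y z : T}
    (h1 : t.lt x y) (h2 : t.lt y z) : t.lt x z := by
  refine ⟨t.trans _ _ _ h1.1 h2.1, fun h => ?_⟩
  subst h
  exact h2.2 (t.antisymm _ _ h2.1 h1.1)

lemma TreeOrder.level_succ_of_immSucc {T : Type*} (t : TreeOrder T) {n : ℕ} {x y : T}
    (hx : x ∈ t.level n) (h : t.ImmSucc x y) : y ∈ t.level (n + 1) := by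
  have hset : {z | t.lt z y} = insert x {z | t.lt z x} := by
    ext z
    simp only [Set.mem_setOf_eq, Set.mem_insert_iff]
    constructor
    · rintro ⟨hzy, hne⟩
      rcases t.pred_chain y z x hzy h.1.1 with hzx | hxz
      · by_cases hzx' : z = x
        · exact Or.inl hzx'
        · exact Or.inr ⟨hzx, hzx'⟩
      · by_cases hxz' : x = z
        · exact Or.inl hxz'.symm
        · exact absurd ⟨z, ⟨hxz, hxz'⟩, ⟨hzy, hne⟩⟩ h.2
    · rintro (rfl | hzx)
      · exact h.1
      · exact t.lt_trans' hzx h.1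
  have hfin : {z | t.lt z x}.Finite := (t.pred_finite x).subset fun z hz => hz.1
  have hxnot : x ∉ {z | t.lt z x} := fun hz => hz.2 rfl
  simp only [TreeOrder.level, Set.mem_setOf_eq] at hx ⊢
  rw [hset, Set.ncard_insert_of_notMem hxnot hfin, hx]

/-- If the template has an eventually singleton ω-branch then every tree it
encodes has an infinite branch (a chain meeting every level). -/
theorem stmt10 {A T : Type*} (τ : Template A) (t : TreeOrder T) (E : A → Set T)
    (henc : Encodes τ t E) (b : ℕ → A) (hb0 : b 0 ∈ τ.t.level 0)
    (hbs : ∀ k, τ.t.ImmSucc (b k) (b (k + 1)))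
    (hev : ∃ K, ∀ k, K ≤ k → τ.label (b k) (b (k + 1)) = 1) :
    ∃ c : ℕ → T, (∀ n, c n ∈ t.level n) ∧ ∀ n, t.lt (c n) (c (n + 1)) := by
  obtain ⟨-, -, hE, -, hlab, -⟩ := henc
  -- b k is in level k of the template
  have hblev : ∀ k, b k ∈ τ.t.level k := by
    intro k
    induction k with
    | zero => exact hb0
    | succ k ih => exact τ.t.level_succ_of_immSucc ih (hbs k)
  -- step: every element of E (b k) has an immediate successor in E (b (k+1))
  have hstep : ∀ k, ∀ x ∈ E (b k), ∃ y, y ∈ E (b (k + 1)) ∧ t.ImmSucc x y := by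
    intro k x hx
    have hcard := hlab (b k) (b (k + 1)) (hbs k) x hx
    have hpos : 0 < τ.label (b k) (b (k + 1)) := τ.label_pos _ _ (hbs k)
    have hne : {y | y ∈ E (b (k + 1)) ∧ t.ImmSucc x y}.Nonempty := by
      apply Set.nonempty_of_ncard_ne_zero
      omega
    exact hne
  -- define the chain
  have h0 : (E (b 0)).Nonempty := (hE 0 (b 0) hb0).1
  let f : ∀ k, {x // x ∈ E (b k)} := fun k =>
    Nat.rec ⟨h0.choose, h0.choose_spec⟩
      (fun k p => ⟨(hstep k p.1 p.2).choose, (hstep k p.1 p.2).choose_spec.1⟩) k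
  have hsucc : ∀ k, t.ImmSucc (f k).1 (f (k + 1)).1 := by
    intro k
    exact (hstep k (f k).1 (f k).2).choose_spec.2
  refine ⟨fun k => (f k).1, fun k => (hE k (b k) (hblev k)).2 (f k).2, fun k => (hsucc k).1⟩
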